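/- Let φ : ℝ/ℤ → ℝ/ℤ preserve the circular order, i.e. sbtw x y z implies sbtw (φ x) (φ y) (φ z) for all x, y, z. Let k ≥ 0 and let a : Fin (2k+1) → ℝ/ℤ be injective with φ ∘ a also injective. Then sgn(φ ∘ a) = sgn(a). -/

import Mathlib

noncomputable section
open Classical

instance : Fact ((0:ℝ) < 1) := ⟨one_pos⟩

/-- The circle `ℝ/ℤ`. -/
abbrev S1 := AddCircle (1 : ℝ)

/-- A tuple of points on the circle is in cyclic order if every increasing triple of
indices gives points in strict circular betweenness. -/
def InCyclicOrder {m : ℕ} (b : Fin m → S1) : Prop :=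
  ∀ i j l : Fin m, i < j → j < l → sbtw (b i) (b j) (b l)

/-- The cyclic sign of a tuple of points on the circle: the sign of any permutation
rearranging the tuple into cyclic order (well defined for injective tuples of odd
length). -/
noncomputable def cycSgn {m : ℕ} (a : Fin m → S1) : ℤ :=
  if h : ∃ σ : Equiv.Perm (Fin m), InCyclicOrder (a ∘ σ) then
    (Equiv.Perm.sign h.choose : ℤ)
  else 1

lemma sbtw_coe_of_lt {x y z : ℝ} (hx : 0 ≤ x) (hxy : x < y) (hyz : y < z) (hz : z < 1) :
    sbtw (x : S1) (y : S1) (z : S1) := by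
  have h1 : (0:ℝ) < 1 := one_pos
  rw [sbtw_iff_btw_not_btw]
  constructor
  · rw [QuotientAddGroup.btw_coe_iff]
    rw [(toIcoMod_eq_self h1).2 ⟨hxy.le, by linarith⟩,
        (toIocMod_eq_self h1).2 ⟨hxy.trans hyz, by linarith⟩]
    linarith
  · rw [QuotientAddGroup.btw_coe_iff]
    have e1 : toIcoMod h1 z y = y + 1 :=
      (toIcoMod_eq_iff h1).2 ⟨⟨by linarith, by linarith⟩, ⟨-1, by simp⟩⟩
    have e2 : toIocMod h1 z x = x + 1 :=
      (toIocMod_eq_iff h1).2 ⟨⟨by linarith, by linarith⟩, ⟨-1, by simp⟩⟩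
    rw [e1, e2]
    push_neg
    linarith

lemma exists_cyclic {m : ℕ} (b : Fin m → S1) (hb : Function.Injective b) :
    ∃ σ : Equiv.Perm (Fin m), InCyclicOrder (b ∘ σ) := by
  set f : Fin m → ℝ := fun i => ((AddCircle.equivIco 1 0 (b i) : ℝ)) with hf
  have hmem : ∀ i, f i ∈ Set.Ico (0:ℝ) 1 := by
    intro i
    have := (AddCircle.equivIco 1 0 (b i)).2
    simpa using this
  have hfb : ∀ i, (f i : S1) = b i := by
    intro i
    exact (AddCircle.equivIco 1 0).symm_apply_apply (b i)
  have hfi : Function.Injective f := by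
    intro i j h
    apply hb
    rw [← hfb i, ← hfb j, h]
  refine ⟨Tuple.sort f, ?_⟩
  have hmono : StrictMono (f ∘ Tuple.sort f) :=
    (Tuple.monotone_sort f).strictMono_of_injective (hfi.comp (Equiv.injective _))
  intro i j l hij hjl
  rw [Function.comp_apply, Function.comp_apply, Function.comp_apply,
    ← hfb, ← hfb, ← hfb]
  exact sbtw_coe_of_lt (hmem _).1 (hmono hij) (hmono hjl) (hmem _).2

/-- Cyclic order on indices. -/
def Cyc {m : ℕ} (x y z : Fin m) : Prop :=
  (x < y ∧ y < z) ∨ (y < z ∧ z < x) ∨ (z < x ∧ x < y)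

lemma cyc_or_cyc {m : ℕ} {x y z : Fin m} (hxy : x ≠ y) (hyz : y ≠ z) (hxz : x ≠ z) :
    Cyc x y z ∨ Cyc z y x := by
  have h1 := Fin.val_ne_of_ne hxy
  have h2 := Fin.val_ne_of_ne hyz
  have h3 := Fin.val_ne_of_ne hxz
  simp only [Cyc, Fin.lt_def]
  omega

lemma sbtw_of_cyc {m : ℕ} {c : Fin m → S1} (hc : InCyclicOrder c) {x y z : Fin m}
    (h : Cyc x y z) : sbtw (c x) (c y) (c z) := by
  rcases h with ⟨h1, h2⟩ | ⟨h1, h2⟩ | ⟨h1, h2⟩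
  · exact hc _ _ _ h1 h2
  · exact sbtw_cyclic_right (hc _ _ _ h1 h2)
  · exact sbtw_cyclic_left (hc _ _ _ h1 h2)

lemma rho_eq_sub {n : ℕ} (ρ : Equiv.Perm (Fin (n+1)))
    (hρ : ∀ i j l : Fin (n+1), i < j → j < l → Cyc (ρ i) (ρ j) (ρ l)) :
    ∀ i, ρ i = i - ρ.symm 0 := by
  set t : Fin (n+1) := ρ.symm 0 with ht
  have hρt : ρ t = 0 := ρ.apply_symm_apply 0
  have h0 : ∀ i, i ≠ t → 0 < ρ i := by
    intro i hi
    have : ρ i ≠ 0 := fun h => hi (by rw [← hρt] at h; exact ρ.injective h)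
    exact Fin.pos_of_ne_zero this
  have h1 : ∀ i j, t < i → i < j → ρ i < ρ j := by
    intro i j hti hij
    have := hρ t i j hti hij
    rw [hρt] at this
    rcases this with ⟨h, h'⟩ | ⟨h, h'⟩ | ⟨h, h'⟩
    · exact h'
    · exact absurd h' (Fin.not_lt_zero _)
    · exact absurd h (Fin.not_lt_zero _)
  have h2 : ∀ i j, i < j → j < t → ρ i < ρ j := by
    intro i j hij hjt
    have := hρ i j t hij hjt
    rw [hρt] at this
    rcases this with ⟨h, h'⟩ | ⟨h, h'⟩ | ⟨h, h'⟩
    · exact absurd h' (Fin.not_lt_zero _)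
    · exact absurd h (Fin.not_lt_zero _)
    · exact h'
  have h3 : ∀ i j, i < t → t < j → ρ j < ρ i := by
    intro i j hit htj
    have := hρ i t j hit htj
    rw [hρt] at this
    rcases this with ⟨h, h'⟩ | ⟨h, h'⟩ | ⟨h, h'⟩
    · exact absurd h (Fin.not_lt_zero _)
    · exact h'
    · exact absurd h' (Fin.not_lt_zero _)
  set q : Fin (n+1) → Fin (n+1) := fun j => ρ (j + t) with hq
  have hmod : ∀ j : Fin (n+1), ((j + t : Fin (n+1)) : ℕ) =
      if j.val + t.val < n+1 then j.val + t.val else j.val + t.val - (n+1) := by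
    intro j
    rw [Fin.add_def]
    dsimp only
    split
    · exact Nat.mod_eq_of_lt ‹_›
    · have hle : n+1 ≤ j.val + t.val := le_of_not_gt ‹_›
      rw [Nat.mod_eq_sub_mod hle, Nat.mod_eq_of_lt (by omega)]
  have hqmono : StrictMono q := by
    intro j1 j2 hj
    have hj' : j1.val < j2.val := hj
    have hj1 := j1.isLt
    have hj2 := j2.isLt
    have htv := t.isLt
    have e1 := hmod j1
    have e2 := hmod j2
    simp only [hq]
    by_cases c1 : j1.val + t.val < n+1
    · by_cases c2 : j2.val + t.val < n+1
      · have hp12 : (j1 + t : Fin (n+1)) < (j2 + t : Fin (n+1)) := by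
          rw [Fin.lt_def, e1, e2]; simp only [c1, c2, if_true]; omega
        rcases eq_or_lt_of_le (show t ≤ j1 + t by
            rw [Fin.le_def, e1]; simp only [c1, if_true]; omega) with he | hlt
        · rw [← he, hρt]
          exact h0 _ (by rw [← he] at hp12; exact ne_of_gt hp12)
        · exact h1 _ _ hlt hp12
      · have hp2 : (j2 + t : Fin (n+1)) < t := by
          rw [Fin.lt_def, e2]; simp only [c2, if_false]; omega
        rcases eq_or_lt_of_le (show t ≤ j1 + t by
            rw [Fin.le_def, e1]; simp only [c1, if_true]; omega) with he | hlt
        · rw [← he, hρt]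
          exact h0 _ (ne_of_lt hp2)
        · exact h3 _ _ hp2 hlt
    · have c2 : ¬ (j2.val + t.val < n+1) := by omega
      have hp12 : (j1 + t : Fin (n+1)) < (j2 + t : Fin (n+1)) := by
        rw [Fin.lt_def, e1, e2]; simp only [c1, c2, if_false]; omega
      have hp2t : (j2 + t : Fin (n+1)) < t := by
        rw [Fin.lt_def, e2]; simp only [c2, if_false]; omega
      exact h2 _ _ hp12 hp2t
  have hqsurj : Function.Surjective q := Finite.surjective_of_injective hqmono.injective
  haveI : WellFoundedLT (Fin (n+1)) := Finite.to_wellFoundedLT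
  have hqid : q = id := by
    apply (hqmono.range_inj strictMono_id).1
    rw [Set.range_id, Set.range_eq_univ]
    exact hqsurj
  intro i
  have := congrFun hqid (i - t)
  simp only [hq, id_eq, sub_add_cancel] at this
  exact this

open Fin.NatCast in
lemma finRotate_pow_apply {n : ℕ} (c : ℕ) (i : Fin (n+1)) :
    ((finRotate (n+1)) ^ c) i = i + (c : Fin (n+1)) := by
  induction c with
  | zero => simp
  | succ c ih =>
    rw [pow_succ']
    simp only [Equiv.Perm.mul_apply, finRotate_succ_apply, ih]
    push_cast
    rw [add_assoc]

open Fin.NatCast in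
lemma sign_sub_rot {k : ℕ} (ρ : Equiv.Perm (Fin (2*k+1))) (t : Fin (2*k+1))
    (h : ∀ i, ρ i = i - t) : Equiv.Perm.sign ρ = 1 := by
  have hneg : ((2*k+1 - t.val : ℕ) : Fin (2*k+1)) = -t := by
    apply eq_neg_of_add_eq_zero_left
    have : ((2*k+1 - t.val : ℕ) : Fin (2*k+1)) + ((t.val : ℕ) : Fin (2*k+1))
        = ((2*k+1 : ℕ) : Fin (2*k+1)) := by
      rw [← Nat.cast_add]
      congr 1
      omega
    rwa [Fin.cast_val_eq_self, Fin.natCast_self] at this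
  have heq2 : ρ = (finRotate (2*k+1)) ^ (2*k+1 - t.val) := by
    ext i
    rw [h i]
    have := finRotate_pow_apply (n := 2*k) (2*k+1 - t.val) i
    rw [this, hneg, sub_eq_add_neg]
  rw [heq2, map_pow, sign_finRotate, Nat.add_sub_cancel, Even.neg_one_pow (even_two_mul k), one_pow]

lemma sign_unique {k : ℕ} {b : Fin (2*k+1) → S1} (hb : Function.Injective b)
    {σ τ : Equiv.Perm (Fin (2*k+1))}
    (hσ : InCyclicOrder (b ∘ σ)) (hτ : InCyclicOrder (b ∘ τ)) :
    Equiv.Perm.sign τ = Equiv.Perm.sign σ := by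
  set ρ : Equiv.Perm (Fin (2*k+1)) := σ⁻¹ * τ with hρdef
  have hcomp : ∀ i, (b ∘ σ) (ρ i) = (b ∘ τ) i := by
    intro i
    simp [hρdef, Equiv.Perm.mul_apply]
  have hcyc : ∀ i j l : Fin (2*k+1), i < j → j < l → Cyc (ρ i) (ρ j) (ρ l) := by
    intro i j l hij hjl
    have hs : sbtw ((b ∘ σ) (ρ i)) ((b ∘ σ) (ρ j)) ((b ∘ σ) (ρ l)) := by
      rw [hcomp, hcomp, hcomp]
      exact hτ i j l hij hjl
    have d1 : ρ i ≠ ρ j := fun h => (ne_of_lt hij) (ρ.injective h)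
    have d2 : ρ j ≠ ρ l := fun h => (ne_of_lt hjl) (ρ.injective h)
    have d3 : ρ i ≠ ρ l := fun h => (ne_of_lt (hij.trans hjl)) (ρ.injective h)
    rcases cyc_or_cyc d1 d2 d3 with h | h
    · exact h
    · exact absurd (sbtw_of_cyc hσ h) (sbtw_asymm hs)
  have hval : ∀ i, ρ i = i - ρ.symm 0 := rho_eq_sub ρ hcyc
  have hsρ : Equiv.Perm.sign ρ = 1 := sign_sub_rot ρ (ρ.symm 0) hval
  have : τ = σ * ρ := by rw [hρdef, mul_inv_cancel_left]
  rw [this, map_mul, hsρ, mul_one]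

theorem stmt6 (φ : S1 → S1)
    (hφ : ∀ x y z : S1, sbtw x y z → sbtw (φ x) (φ y) (φ z))
    (k : ℕ) (a : Fin (2 * k + 1) → S1) (ha : Function.Injective a)
    (hφa : Function.Injective (φ ∘ a)) :
    cycSgn (φ ∘ a) = cycSgn a := by
  have hE1 : ∃ σ : Equiv.Perm (Fin (2*k+1)), InCyclicOrder ((φ ∘ a) ∘ σ) :=
    exists_cyclic _ hφa
  have hE2 : ∃ σ : Equiv.Perm (Fin (2*k+1)), InCyclicOrder (a ∘ σ) :=
    exists_cyclic _ ha
  rw [cycSgn, cycSgn, dif_pos hE1, dif_pos hE2]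
  have h2' : InCyclicOrder ((φ ∘ a) ∘ hE2.choose) := by
    intro i j l hij hjl
    exact hφ _ _ _ (hE2.choose_spec i j l hij hjl)
  have := sign_unique hφa hE1.choose_spec h2'
  exact_mod_cast congrArg (fun s : ℤˣ => (s : ℤ)) this.symm
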